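/- Let m be a positive integer with 2m ≢ 1 (mod 3), n = 3m, q = 2^n, and let δ ∈ F_q satisfy Tr_m^{3m}(δ) = 0. Define F : F_q → F_q by F(x) = (x^{2^m} + x + δ)^{2^{3m−1} + 2^{m−1}} + x. Then for every c ∈ F_q not in the subfield F_{2^m} (i.e., c^{2^m} ≠ c), F is APcN: for all a, b ∈ F_q the equation F(x+a) + c·F(x) = b has at most two solutions x ∈ F_q, and there exist a, b ∈ F_q for which it has exactly two solutions. -/

import Mathlib

set_option maxHeartbeats 1000000 in
theorem core_unique {K : Type*} [Field K] (σ : K →+* K) (h3 : ∀ x : K, σ (σ (σ x)) = x)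
    (h2 : (2 : K) = 0) (c U A : K) (hc : σ c ≠ c)
    (hU : U + σ U + σ (σ U) = 0) (hA : A + σ A + σ (σ A) = 0)
    (e f : K) (he : e ≠ 0) (hf : f ≠ 0)
    (hRe : (1 + c ^ 2) * ((σ e + e) * (σ (σ e) + σ e) + (σ e + e) * σ U + (σ (σ e) + σ e) * U + e ^ 2) + (σ e + e) * σ A + (σ (σ e) + σ e) * A = 0)
    (hRf : (1 + c ^ 2) * ((σ f + f) * (σ (σ f) + σ f) + (σ f + f) * σ U + (σ (σ f) + σ f) * U + f ^ 2) + (σ f + f) * σ A + (σ (σ f) + σ f) * A = 0) : e = f := by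
  have haddz : ∀ x y : K, x + y = 0 → x = y := fun x y h => by linear_combination h - y * h2
  have hsqz : ∀ x : K, x ^ 2 = 0 → x = 0 := fun x h =>
    pow_eq_zero_iff (n := 2) (by norm_num) |>.mp h
  have hsq : ∀ x y : K, x ^ 2 = y ^ 2 → x = y := fun x y h => by
    refine haddz x y (hsqz _ ?_); linear_combination h + (x * y + y * y) * h2
  have hinj : ∀ x : K, σ x = 0 → x = 0 := fun x h =>
    σ.injective (by rw [map_zero]; exact h)
  have heps : (1 : K) + c ^ 2 ≠ 0 := by
    intro h
    have hc1 : c = 1 := hsq c 1 (by linear_combination -h + c ^ 2 * h2)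
    exact hc (by rw [hc1, map_one])
  have hepsne : (1 : K) + σ c ^ 2 ≠ 0 := by
    intro h; refine heps (hinj _ ?_)
    simp only [map_add, map_one, map_pow]; exact h
  have hepsne2 : (1 : K) + σ (σ c) ^ 2 ≠ 0 := by
    intro h; refine hepsne (hinj _ ?_)
    simp only [map_add, map_one, map_pow]; exact h
  have hP1 : ((1 : K) + c ^ 2) + (1 + σ c ^ 2) ≠ 0 := by
    intro h
    exact hc (hsq _ _ (by linear_combination h - (1 + c ^ 2) * h2))
  have hP2 : ((1 : K) + σ c ^ 2) + (1 + σ (σ c) ^ 2) ≠ 0 := by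
    intro h; refine hP1 (hinj _ ?_)
    simp only [map_add, map_one, map_pow, h3]; linear_combination h
  have hE : σ e + e ≠ 0 := by
    intro hh
    have hsh : σ (σ e) + σ e = 0 := by
      have := congrArg σ hh; simpa only [map_add, map_zero] using this
    have hz : ((1 : K) + c ^ 2) * e ^ 2 = 0 := by
      linear_combination (1) * hRe + (-(A) - (U) - (U) * (c) ^ 2 - (c) ^ 2 * (e) - (c) ^ 2 * (σ e) - (e) - (σ e)) * hsh + (-(c) ^ 2 * (σ U) - (σ A) - (σ U)) * hh + (0) * h2
    exact he (hsqz _ ((mul_eq_zero.mp hz).resolve_left heps))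
  have hF : σ f + f ≠ 0 := by
    intro hh
    have hsh : σ (σ f) + σ f = 0 := by
      have := congrArg σ hh; simpa only [map_add, map_zero] using this
    have hz : ((1 : K) + c ^ 2) * f ^ 2 = 0 := by
      linear_combination (1) * hRf + (-(A) - (U) - (U) * (c) ^ 2 - (c) ^ 2 * (f) - (c) ^ 2 * (σ f) - (f) - (σ f)) * hsh + (-(c) ^ 2 * (σ U) - (σ A) - (σ U)) * hh + (0) * h2
    exact hf (hsqz _ ((mul_eq_zero.mp hz).resolve_left heps))
  have hW0 : σ (σ e) + e ≠ 0 := by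
    intro h
    refine hE (hinj _ ?_)
    have h6 := congrArg σ h
    simp only [map_add, map_zero, h3] at h6
    simp only [map_add, h3]; linear_combination h6 + h - e * h2
  have hWf0 : σ (σ f) + f ≠ 0 := by
    intro h
    refine hF (hinj _ ?_)
    have h6 := congrArg σ h
    simp only [map_add, map_zero, h3] at h6
    simp only [map_add, h3]; linear_combination h6 + h - f * h2
  have hN1 : ((1 + c ^ 2) + (1 + σ c ^ 2)) * ((σ e + e) * σ A + (σ (σ e) + σ e) * A) = ((1 + c ^ 2) * (1 + σ c ^ 2)) * (σ (σ e) + e) ^ 2 := by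
    have hsRe := congrArg σ hRe
    simp only [map_add, map_mul, map_pow, map_one, map_zero, h3] at hsRe
    linear_combination (1 + (c) ^ 2) * hsRe + (1 + (σ c) ^ 2) * hRe + (-(c) ^ 2 * (σ (σ e)) - (c) ^ 2 * (σ (σ e)) * (σ c) ^ 2 - (c) ^ 2 * (σ c) ^ 2 * (σ e) - (c) ^ 2 * (σ e) - (σ (σ e)) - (σ (σ e)) * (σ c) ^ 2 - (σ c) ^ 2 * (σ e) - (σ e)) * hU + (-(c) ^ 2 * (σ (σ e)) - (c) ^ 2 * (σ e) - (σ (σ e)) - (σ e)) * hA + ((A) * (c) ^ 2 * (σ (σ e)) + (A) * (c) ^ 2 * (σ e) + (A) * (σ (σ e)) + (A) * (σ e) - 2 * (c) ^ 2 * (e) * (σ (σ e)) - 2 * (c) ^ 2 * (e) * (σ (σ e)) * (σ c) ^ 2 - (c) ^ 2 * (e) * (σ U) - (c) ^ 2 * (e) * (σ U) * (σ c) ^ 2 - (c) ^ 2 * (e) * (σ c) ^ 2 * (σ e) - (c) ^ 2 * (e) * (σ e) - (c) ^ 2 * (e) ^ 2 - (c) ^ 2 * (e) ^ 2 * (σ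 c) ^ 2 - (c) ^ 2 * (σ (σ e)) * (σ c) ^ 2 * (σ e) - (c) ^ 2 * (σ (σ e)) * (σ e) - (c) ^ 2 * (σ (σ e)) ^ 2 - (c) ^ 2 * (σ (σ e)) ^ 2 * (σ c) ^ 2 + (c) ^ 2 * (σ A) * (σ e) - (c) ^ 2 * (σ c) ^ 2 * (σ e) ^ 2 - (c) ^ 2 * (σ e) ^ 2 - 2 * (e) * (σ (σ e)) - 2 * (e) * (σ (σ e)) * (σ c) ^ 2 - (e) * (σ U) - (e) * (σ U) * (σ c) ^ 2 - (e) * (σ c) ^ 2 * (σ e) - (e) * (σ e) - (e) ^ 2 - (e) ^ 2 * (σ c) ^ 2 - (σ (σ e)) * (σ c) ^ 2 * (σ e) - (σ (σ e)) * (σ e) - (σ (σ e)) ^ 2 - (σ (σ e)) ^ 2 * (σ c) ^ 2 + (σ A) * (σ e) - (σ c) ^ 2 * (σ e) ^ 2 - (σ e) ^ 2) * h2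
  have hN1f : ((1 + c ^ 2) + (1 + σ c ^ 2)) * ((σ f + f) * σ A + (σ (σ f) + σ f) * A) = ((1 + c ^ 2) * (1 + σ c ^ 2)) * (σ (σ f) + f) ^ 2 := by
    have hsRf := congrArg σ hRf
    simp only [map_add, map_mul, map_pow, map_one, map_zero, h3] at hsRf
    linear_combination (1 + (c) ^ 2) * hsRf + (1 + (σ c) ^ 2) * hRf + (-(c) ^ 2 * (σ (σ f)) - (c) ^ 2 * (σ (σ f)) * (σ c) ^ 2 - (c) ^ 2 * (σ c) ^ 2 * (σ f) - (c) ^ 2 * (σ f) - (σ (σ f)) - (σ (σ f)) * (σ c) ^ 2 - (σ c) ^ 2 * (σ f) - (σ f)) * hU + (-(c) ^ 2 * (σ (σ f)) - (c) ^ 2 * (σ f) - (σ (σ f)) - (σ f)) * hA + ((A) * (c) ^ 2 * (σ (σ f)) + (A) * (c) ^ 2 * (σ f) + (A) * (σ (σ f)) + (A) * (σ f) - 2 * (c) ^ 2 * (f) * (σ (σ f)) - 2 * (c) ^ 2 * (f) * (σ (σ f)) * (σ c) ^ 2 - (c) ^ 2 * (f) * (σ U) - (c) ^ 2 * (f) *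 (σ U) * (σ c) ^ 2 - (c) ^ 2 * (f) * (σ c) ^ 2 * (σ f) - (c) ^ 2 * (f) * (σ f) - (c) ^ 2 * (f) ^ 2 - (c) ^ 2 * (f) ^ 2 * (σ c) ^ 2 - (c) ^ 2 * (σ (σ f)) * (σ c) ^ 2 * (σ f) - (c) ^ 2 * (σ (σ f)) * (σ f) - (c) ^ 2 * (σ (σ f)) ^ 2 - (c) ^ 2 * (σ (σ f)) ^ 2 * (σ c) ^ 2 + (c) ^ 2 * (σ A) * (σ f) - (c) ^ 2 * (σ c) ^ 2 * (σ f) ^ 2 - (c) ^ 2 * (σ f) ^ 2 - 2 * (f) * (σ (σ f)) - 2 * (f) * (σ (σ f)) * (σ c) ^ 2 - (f) * (σ U) - (f) * (σ U) * (σ c) ^ 2 - (f) * (σ c) ^ 2 * (σ f) - (f) * (σ f) - (f) ^ 2 - (f) ^ 2 * (σ c) ^ 2 - (σ (σ f)) * (σ c) ^ 2 * (σ f) - (σ (σ f)) * (σ f) - (σ (σ f)) ^ 2 - (σ (σ f)) ^ 2 * (σ c) ^ 2 + (σ A) * (σ f) - (σ c) ^ 2 * (σ f) ^ 2 - (σ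 f) ^ 2) * h2
  have hN2 : ((1 + σ c ^ 2) + (1 + σ (σ c) ^ 2)) * ((σ e + e) * σ A + (σ (σ e) + σ e) * A) = ((1 + σ c ^ 2) * (1 + σ (σ c) ^ 2)) * (σ e + e) ^ 2 := by
    have hsN1 := congrArg σ hN1
    simp only [map_add, map_mul, map_pow, map_one, map_zero, h3] at hsN1
    linear_combination (1) * hsN1 + (-(σ (σ c)) ^ 2 * (σ (σ e)) - (σ (σ c)) ^ 2 * (σ e) - 2 * (σ (σ e)) - (σ (σ e)) * (σ c) ^ 2 - (σ c) ^ 2 * (σ e) - 2 * (σ e)) * hA + ((A) * (σ (σ c)) ^ 2 * (σ (σ e)) + (A) * (σ (σ c)) ^ 2 * (σ e) + 2 * (A) * (σ (σ e)) + (A) * (σ (σ e)) * (σ c) ^ 2 + (A) * (σ c) ^ 2 * (σ e) + 2 * (A) * (σ e) + (σ (σ c)) ^ 2 * (σ A) * (σ e) + (σ A) * (σ c) ^ 2 * (σ e) + 2 * (σ A) * (σ e)) * h2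
  have hN2f : ((1 + σ c ^ 2) + (1 + σ (σ c) ^ 2)) * ((σ f + f) * σ A + (σ (σ f) + σ f) * A) = ((1 + σ c ^ 2) * (1 + σ (σ c) ^ 2)) * (σ f + f) ^ 2 := by
    have hsN1f := congrArg σ hN1f
    simp only [map_add, map_mul, map_pow, map_one, map_zero, h3] at hsN1f
    linear_combination (1) * hsN1f + (-(σ (σ c)) ^ 2 * (σ (σ f)) - (σ (σ c)) ^ 2 * (σ f) - 2 * (σ (σ f)) - (σ (σ f)) * (σ c) ^ 2 - (σ c) ^ 2 * (σ f) - 2 * (σ f)) * hA + ((A) * (σ (σ c)) ^ 2 * (σ (σ f)) + (A) * (σ (σ c)) ^ 2 * (σ f) + 2 * (A) * (σ (σ f)) + (A) * (σ (σ f)) * (σ c) ^ 2 + (A) * (σ c) ^ 2 * (σ f) + 2 * (A) * (σ f) + (σ (σ c)) ^ 2 * (σ A) * (σ f) + (σ A) * (σ c) ^ 2 * (σ f) + 2 * (σ A) * (σ f)) * h2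
  have hNf0 : ((σ f + f) * σ A + (σ (σ f) + σ f) * A) ≠ 0 := by
    intro h
    have hz : ((1 + σ c ^ 2) * (1 + σ (σ c) ^ 2)) * (σ f + f) ^ 2 = 0 := by rw [← hN2f, h, mul_zero]
    rcases mul_eq_zero.mp hz with h' | h'
    · exact (mul_ne_zero hepsne hepsne2) h'
    · exact hF (hsqz _ h')
  have hcre : (((1 + σ c ^ 2) + (1 + σ (σ c) ^ 2)) * ((1 + c ^ 2) * (1 + σ c ^ 2))) * (σ (σ e) + e) ^ 2 = (((1 + c ^ 2) + (1 + σ c ^ 2)) * ((1 + σ c ^ 2) * (1 + σ (σ c) ^ 2))) * (σ e + e) ^ 2 := by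
    linear_combination (2 + (σ (σ c)) ^ 2 + (σ c) ^ 2) * hN1 + (-2 - (c) ^ 2 - (σ c) ^ 2) * hN2 + (2 * (c) ^ 2 * (e) * (σ (σ c)) ^ 2 * (σ (σ e)) + 2 * (c) ^ 2 * (e) * (σ (σ c)) ^ 2 * (σ (σ e)) * (σ c) ^ 2 - 2 * (c) ^ 2 * (e) * (σ (σ c)) ^ 2 * (σ c) ^ 2 * (σ e) - 2 * (c) ^ 2 * (e) * (σ (σ c)) ^ 2 * (σ e) + 4 * (c) ^ 2 * (e) * (σ (σ e)) + 6 * (c) ^ 2 * (e) * (σ (σ e)) * (σ c) ^ 2 + 2 * (c) ^ 2 * (e) * (σ (σ e)) * (σ c) ^ 4 - 2 * (c) ^ 2 * (e) * (σ c) ^ 2 * (σ e) - 2 * (c) ^ 2 * (e) * (σ e) + (c) ^ 2 * (e) ^ 2 + 2 * (c) ^ 2 * (e) ^ 2 * (σ c) ^ 2 + (c) ^ 2 * (e) ^ 2 * (σ c) ^ 4 + (c) ^ 2 * (σ (σ c)) ^ 2 * (σ (σ e)) ^ 2 + (c) ^ 2 * (σ (σ c)) ^ 2 * (σ (σ e))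 ^ 2 * (σ c) ^ 2 - (c) ^ 2 * (σ (σ c)) ^ 2 * (σ c) ^ 2 * (σ e) ^ 2 - (c) ^ 2 * (σ (σ c)) ^ 2 * (σ e) ^ 2 + 2 * (c) ^ 2 * (σ (σ e)) ^ 2 + 3 * (c) ^ 2 * (σ (σ e)) ^ 2 * (σ c) ^ 2 + (c) ^ 2 * (σ (σ e)) ^ 2 * (σ c) ^ 4 - (c) ^ 2 * (σ c) ^ 2 * (σ e) ^ 2 - (c) ^ 2 * (σ e) ^ 2 + 2 * (e) * (σ (σ c)) ^ 2 * (σ (σ e)) + 2 * (e) * (σ (σ c)) ^ 2 * (σ (σ e)) * (σ c) ^ 2 - 6 * (e) * (σ (σ c)) ^ 2 * (σ c) ^ 2 * (σ e) - 2 * (e) * (σ (σ c)) ^ 2 * (σ c) ^ 4 * (σ e) - 4 * (e) * (σ (σ c)) ^ 2 * (σ e) + 4 * (e) * (σ (σ e)) + 6 * (e) * (σ (σ e)) * (σ c) ^ 2 + 2 * (e) * (σ (σ e)) * (σ c) ^ 4 - 6 * (e) * (σ c) ^ 2 * (σ e) - 2 * (e) * (σ c) ^ 4 * (σ e) - 4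 * (e) * (σ e) - (e) ^ 2 * (σ (σ c)) ^ 2 - 2 * (e) ^ 2 * (σ (σ c)) ^ 2 * (σ c) ^ 2 - (e) ^ 2 * (σ (σ c)) ^ 2 * (σ c) ^ 4 + (σ (σ c)) ^ 2 * (σ (σ e)) ^ 2 + (σ (σ c)) ^ 2 * (σ (σ e)) ^ 2 * (σ c) ^ 2 - 3 * (σ (σ c)) ^ 2 * (σ c) ^ 2 * (σ e) ^ 2 - (σ (σ c)) ^ 2 * (σ c) ^ 4 * (σ e) ^ 2 - 2 * (σ (σ c)) ^ 2 * (σ e) ^ 2 + 2 * (σ (σ e)) ^ 2 + 3 * (σ (σ e)) ^ 2 * (σ c) ^ 2 + (σ (σ e)) ^ 2 * (σ c) ^ 4 - 3 * (σ c) ^ 2 * (σ e) ^ 2 - (σ c) ^ 4 * (σ e) ^ 2 - 2 * (σ e) ^ 2) * h2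
  have hcrf : (((1 + σ c ^ 2) + (1 + σ (σ c) ^ 2)) * ((1 + c ^ 2) * (1 + σ c ^ 2))) * (σ (σ f) + f) ^ 2 = (((1 + c ^ 2) + (1 + σ c ^ 2)) * ((1 + σ c ^ 2) * (1 + σ (σ c) ^ 2))) * (σ f + f) ^ 2 := by
    linear_combination (2 + (σ (σ c)) ^ 2 + (σ c) ^ 2) * hN1f + (-2 - (c) ^ 2 - (σ c) ^ 2) * hN2f + (2 * (c) ^ 2 * (f) * (σ (σ c)) ^ 2 * (σ (σ f)) + 2 * (c) ^ 2 * (f) * (σ (σ c)) ^ 2 * (σ (σ f)) * (σ c) ^ 2 - 2 * (c) ^ 2 * (f) * (σ (σ c)) ^ 2 * (σ c) ^ 2 * (σ f) - 2 * (c) ^ 2 * (f) * (σ (σ c)) ^ 2 * (σ f) + 4 * (c) ^ 2 * (f) * (σ (σ f)) + 6 * (c) ^ 2 * (f) * (σ (σ f)) * (σ c) ^ 2 + 2 * (c) ^ 2 * (f) * (σ (σ f)) * (σ c) ^ 4 - 2 * (c) ^ 2 * (f) * (σ c) ^ 2 * (σ f) - 2 * (c) ^ 2 * (f) * (σ f)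 + (c) ^ 2 * (f) ^ 2 + 2 * (c) ^ 2 * (f) ^ 2 * (σ c) ^ 2 + (c) ^ 2 * (f) ^ 2 * (σ c) ^ 4 + (c) ^ 2 * (σ (σ c)) ^ 2 * (σ (σ f)) ^ 2 + (c) ^ 2 * (σ (σ c)) ^ 2 * (σ (σ f)) ^ 2 * (σ c) ^ 2 - (c) ^ 2 * (σ (σ c)) ^ 2 * (σ c) ^ 2 * (σ f) ^ 2 - (c) ^ 2 * (σ (σ c)) ^ 2 * (σ f) ^ 2 + 2 * (c) ^ 2 * (σ (σ f)) ^ 2 + 3 * (c) ^ 2 * (σ (σ f)) ^ 2 * (σ c) ^ 2 + (c) ^ 2 * (σ (σ f)) ^ 2 * (σ c) ^ 4 - (c) ^ 2 * (σ c) ^ 2 * (σ f) ^ 2 - (c) ^ 2 * (σ f) ^ 2 + 2 * (f) * (σ (σ c)) ^ 2 * (σ (σ f)) + 2 * (f) * (σ (σ c)) ^ 2 * (σ (σ f)) * (σ c) ^ 2 - 6 * (f) * (σ (σ c)) ^ 2 * (σ c) ^ 2 * (σ f) - 2 * (f) * (σ (σ c)) ^ 2 * (σ c) ^ 4 * (σ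 f) - 4 * (f) * (σ (σ c)) ^ 2 * (σ f) + 4 * (f) * (σ (σ f)) + 6 * (f) * (σ (σ f)) * (σ c) ^ 2 + 2 * (f) * (σ (σ f)) * (σ c) ^ 4 - 6 * (f) * (σ c) ^ 2 * (σ f) - 2 * (f) * (σ c) ^ 4 * (σ f) - 4 * (f) * (σ f) - (f) ^ 2 * (σ (σ c)) ^ 2 - 2 * (f) ^ 2 * (σ (σ c)) ^ 2 * (σ c) ^ 2 - (f) ^ 2 * (σ (σ c)) ^ 2 * (σ c) ^ 4 + (σ (σ c)) ^ 2 * (σ (σ f)) ^ 2 + (σ (σ c)) ^ 2 * (σ (σ f)) ^ 2 * (σ c) ^ 2 - 3 * (σ (σ c)) ^ 2 * (σ c) ^ 2 * (σ f) ^ 2 - (σ (σ c)) ^ 2 * (σ c) ^ 4 * (σ f) ^ 2 - 2 * (σ (σ c)) ^ 2 * (σ f) ^ 2 + 2 * (σ (σ f)) ^ 2 + 3 * (σ (σ f)) ^ 2 * (σ c) ^ 2 + (σ (σ f)) ^ 2 * (σ c) ^ 4 - 3 * (σ c) ^ 2 * (σ f) ^ 2 - (σ c) ^ 4 * (σ f)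 ^ 2 - 2 * (σ f) ^ 2) * h2
  have h5 : (((1 + σ c ^ 2) + (1 + σ (σ c) ^ 2)) * ((1 + c ^ 2) * (1 + σ c ^ 2))) * ((σ (σ e) + e) * (σ f + f) + (σ (σ f) + f) * (σ e + e)) ^ 2 = 0 := by
    linear_combination (2 * (f) * (σ f) + (f) ^ 2 + (σ f) ^ 2) * hcre + (-2 * (e) * (σ e) - (e) ^ 2 - (σ e) ^ 2) * hcrf + ((c) ^ 2 * (e) * (f) * (σ (σ c)) ^ 2 * (σ (σ e)) * (σ (σ f)) + (c) ^ 2 * (e) * (f) * (σ (σ c)) ^ 2 * (σ (σ e)) * (σ (σ f)) * (σ c) ^ 2 + (c) ^ 2 * (e) * (f) * (σ (σ c)) ^ 2 * (σ (σ e)) * (σ c) ^ 2 * (σ f) + (c) ^ 2 * (e) * (f) * (σ (σ c)) ^ 2 * (σ (σ e)) * (σ f) + 5 * (c) ^ 2 * (e) * (f) * (σ (σ c)) ^ 2 * (σ (σ f)) * (σ c) ^ 2 * (σ e) + 5 * (c) ^ 2 * (e) * (f) * (σ (σ c)) ^ 2 * (σ (σ f)) * (σ e) + (c) ^ 2 *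 (e) * (f) * (σ (σ c)) ^ 2 * (σ c) ^ 2 * (σ e) * (σ f) + (c) ^ 2 * (e) * (f) * (σ (σ c)) ^ 2 * (σ e) * (σ f) + 2 * (c) ^ 2 * (e) * (f) * (σ (σ e)) * (σ (σ f)) + 3 * (c) ^ 2 * (e) * (f) * (σ (σ e)) * (σ (σ f)) * (σ c) ^ 2 + (c) ^ 2 * (e) * (f) * (σ (σ e)) * (σ (σ f)) * (σ c) ^ 4 + 3 * (c) ^ 2 * (e) * (f) * (σ (σ e)) * (σ c) ^ 2 * (σ f) + (c) ^ 2 * (e) * (f) * (σ (σ e)) * (σ c) ^ 4 * (σ f) + 2 * (c) ^ 2 * (e) * (f) * (σ (σ e)) * (σ f) + 15 * (c) ^ 2 * (e) * (f) * (σ (σ f)) * (σ c) ^ 2 * (σ e) + 5 * (c) ^ 2 * (e) * (f) * (σ (σ f)) * (σ c) ^ 4 * (σ e) + 10 * (c) ^ 2 * (e) * (f) * (σ (σ f)) * (σ e) + 3 * (c) ^ 2 * (e) * (f) * (σ c) ^ 2 * (σ e) * (σ f) + (c) ^ 2 * (e) * (f) * (σ c) ^ 4 * (σ e) * (σ f)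 + 2 * (c) ^ 2 * (e) * (f) * (σ e) * (σ f) + (c) ^ 2 * (e) * (f) ^ 2 * (σ (σ c)) ^ 2 * (σ (σ e)) + (c) ^ 2 * (e) * (f) ^ 2 * (σ (σ c)) ^ 2 * (σ (σ e)) * (σ c) ^ 2 + 3 * (c) ^ 2 * (e) * (f) ^ 2 * (σ (σ c)) ^ 2 * (σ c) ^ 2 * (σ e) + 3 * (c) ^ 2 * (e) * (f) ^ 2 * (σ (σ c)) ^ 2 * (σ e) + 2 * (c) ^ 2 * (e) * (f) ^ 2 * (σ (σ e)) + 3 * (c) ^ 2 * (e) * (f) ^ 2 * (σ (σ e)) * (σ c) ^ 2 + (c) ^ 2 * (e) * (f) ^ 2 * (σ (σ e)) * (σ c) ^ 4 + 9 * (c) ^ 2 * (e) * (f) ^ 2 * (σ c) ^ 2 * (σ e) + 3 * (c) ^ 2 * (e) * (f) ^ 2 * (σ c) ^ 4 * (σ e) + 6 * (c) ^ 2 * (e) * (f) ^ 2 * (σ e) + (c) ^ 2 * (e) * (σ (σ c)) ^ 2 * (σ (σ e)) * (σ (σ f)) * (σ c) ^ 2 * (σ f) + (c) ^ 2 * (e)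 * (σ (σ c)) ^ 2 * (σ (σ e)) * (σ (σ f)) * (σ f) + (c) ^ 2 * (e) * (σ (σ c)) ^ 2 * (σ (σ f)) * (σ c) ^ 2 * (σ e) * (σ f) + (c) ^ 2 * (e) * (σ (σ c)) ^ 2 * (σ (σ f)) * (σ e) * (σ f) + 2 * (c) ^ 2 * (e) * (σ (σ c)) ^ 2 * (σ (σ f)) ^ 2 * (σ c) ^ 2 * (σ e) + 2 * (c) ^ 2 * (e) * (σ (σ c)) ^ 2 * (σ (σ f)) ^ 2 * (σ e) + 3 * (c) ^ 2 * (e) * (σ (σ e)) * (σ (σ f)) * (σ c) ^ 2 * (σ f) + (c) ^ 2 * (e) * (σ (σ e)) * (σ (σ f)) * (σ c) ^ 4 * (σ f) + 2 * (c) ^ 2 * (e) * (σ (σ e)) * (σ (σ f)) * (σ f) + 3 * (c) ^ 2 * (e) * (σ (σ f)) * (σ c) ^ 2 * (σ e) * (σ f) + (c) ^ 2 * (e) * (σ (σ f)) * (σ c) ^ 4 * (σ e) * (σ f) + 2 * (c) ^ 2 * (e) * (σ (σ f)) * (σ e) * (σ f) + 6 * (c) ^ 2 * (e) * (σ (σ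 f)) ^ 2 * (σ c) ^ 2 * (σ e) + 2 * (c) ^ 2 * (e) * (σ (σ f)) ^ 2 * (σ c) ^ 4 * (σ e) + 4 * (c) ^ 2 * (e) * (σ (σ f)) ^ 2 * (σ e) + 3 * (c) ^ 2 * (e) ^ 2 * (f) * (σ (σ c)) ^ 2 * (σ (σ f)) + 3 * (c) ^ 2 * (e) ^ 2 * (f) * (σ (σ c)) ^ 2 * (σ (σ f)) * (σ c) ^ 2 + (c) ^ 2 * (e) ^ 2 * (f) * (σ (σ c)) ^ 2 * (σ c) ^ 2 * (σ f) + (c) ^ 2 * (e) ^ 2 * (f) * (σ (σ c)) ^ 2 * (σ f) + 6 * (c) ^ 2 * (e) ^ 2 * (f) * (σ (σ f)) + 9 * (c) ^ 2 * (e) ^ 2 * (f) * (σ (σ f)) * (σ c) ^ 2 + 3 * (c) ^ 2 * (e) ^ 2 * (f) * (σ (σ f)) * (σ c) ^ 4 + 3 * (c) ^ 2 * (e) ^ 2 * (f) * (σ c) ^ 2 * (σ f) + (c) ^ 2 * (e) ^ 2 * (f) * (σ c) ^ 4 * (σ f) + 2 * (c) ^ 2 * (e) ^ 2 * (f) * (σ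 f) + 4 * (c) ^ 2 * (e) ^ 2 * (f) ^ 2 + 2 * (c) ^ 2 * (e) ^ 2 * (f) ^ 2 * (σ (σ c)) ^ 2 + 2 * (c) ^ 2 * (e) ^ 2 * (f) ^ 2 * (σ (σ c)) ^ 2 * (σ c) ^ 2 + 6 * (c) ^ 2 * (e) ^ 2 * (f) ^ 2 * (σ c) ^ 2 + 2 * (c) ^ 2 * (e) ^ 2 * (f) ^ 2 * (σ c) ^ 4 + (c) ^ 2 * (e) ^ 2 * (σ (σ c)) ^ 2 * (σ (σ f)) * (σ c) ^ 2 * (σ f) + (c) ^ 2 * (e) ^ 2 * (σ (σ c)) ^ 2 * (σ (σ f)) * (σ f) + (c) ^ 2 * (e) ^ 2 * (σ (σ c)) ^ 2 * (σ (σ f)) ^ 2 + (c) ^ 2 * (e) ^ 2 * (σ (σ c)) ^ 2 * (σ (σ f)) ^ 2 * (σ c) ^ 2 + 3 * (c) ^ 2 * (e) ^ 2 * (σ (σ f)) * (σ c) ^ 2 * (σ f) + (c) ^ 2 * (e) ^ 2 * (σ (σ f)) * (σ c) ^ 4 * (σ f) + 2 * (c) ^ 2 * (e) ^ 2 * (σ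 (σ f)) * (σ f) + 2 * (c) ^ 2 * (e) ^ 2 * (σ (σ f)) ^ 2 + 3 * (c) ^ 2 * (e) ^ 2 * (σ (σ f)) ^ 2 * (σ c) ^ 2 + (c) ^ 2 * (e) ^ 2 * (σ (σ f)) ^ 2 * (σ c) ^ 4 + (c) ^ 2 * (f) * (σ (σ c)) ^ 2 * (σ (σ e)) * (σ (σ f)) * (σ c) ^ 2 * (σ e) + (c) ^ 2 * (f) * (σ (σ c)) ^ 2 * (σ (σ e)) * (σ (σ f)) * (σ e) + (c) ^ 2 * (f) * (σ (σ c)) ^ 2 * (σ (σ e)) * (σ c) ^ 2 * (σ e) * (σ f) + (c) ^ 2 * (f) * (σ (σ c)) ^ 2 * (σ (σ e)) * (σ e) * (σ f) + 2 * (c) ^ 2 * (f) * (σ (σ c)) ^ 2 * (σ (σ f)) * (σ c) ^ 2 * (σ e) ^ 2 + 2 * (c) ^ 2 * (f) * (σ (σ c)) ^ 2 * (σ (σ f)) * (σ e) ^ 2 + 3 * (c) ^ 2 * (f) * (σ (σ e)) * (σ (σ f)) * (σ c) ^ 2 * (σ e) + (c) ^ 2 * (f) * (σ (σ e)) * (σ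 (σ f)) * (σ c) ^ 4 * (σ e) + 2 * (c) ^ 2 * (f) * (σ (σ e)) * (σ (σ f)) * (σ e) + 3 * (c) ^ 2 * (f) * (σ (σ e)) * (σ c) ^ 2 * (σ e) * (σ f) + (c) ^ 2 * (f) * (σ (σ e)) * (σ c) ^ 4 * (σ e) * (σ f) + 2 * (c) ^ 2 * (f) * (σ (σ e)) * (σ e) * (σ f) + 6 * (c) ^ 2 * (f) * (σ (σ f)) * (σ c) ^ 2 * (σ e) ^ 2 + 2 * (c) ^ 2 * (f) * (σ (σ f)) * (σ c) ^ 4 * (σ e) ^ 2 + 4 * (c) ^ 2 * (f) * (σ (σ f)) * (σ e) ^ 2 + (c) ^ 2 * (f) ^ 2 * (σ (σ c)) ^ 2 * (σ (σ e)) * (σ c) ^ 2 * (σ e) + (c) ^ 2 * (f) ^ 2 * (σ (σ c)) ^ 2 * (σ (σ e)) * (σ e) + (c) ^ 2 * (f) ^ 2 * (σ (σ c)) ^ 2 * (σ c) ^ 2 * (σ e) ^ 2 + (c) ^ 2 * (f) ^ 2 * (σ (σ c)) ^ 2 * (σ e) ^ 2 + 3 * (c) ^ 2 * (f) ^ 2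 * (σ (σ e)) * (σ c) ^ 2 * (σ e) + (c) ^ 2 * (f) ^ 2 * (σ (σ e)) * (σ c) ^ 4 * (σ e) + 2 * (c) ^ 2 * (f) ^ 2 * (σ (σ e)) * (σ e) + 3 * (c) ^ 2 * (f) ^ 2 * (σ c) ^ 2 * (σ e) ^ 2 + (c) ^ 2 * (f) ^ 2 * (σ c) ^ 4 * (σ e) ^ 2 + 2 * (c) ^ 2 * (f) ^ 2 * (σ e) ^ 2 + (c) ^ 2 * (σ (σ c)) ^ 2 * (σ (σ e)) * (σ (σ f)) * (σ c) ^ 2 * (σ e) * (σ f) + (c) ^ 2 * (σ (σ c)) ^ 2 * (σ (σ e)) * (σ (σ f)) * (σ e) * (σ f) + (c) ^ 2 * (σ (σ c)) ^ 2 * (σ (σ f)) ^ 2 * (σ c) ^ 2 * (σ e) ^ 2 + (c) ^ 2 * (σ (σ c)) ^ 2 * (σ (σ f)) ^ 2 * (σ e) ^ 2 + 3 * (c) ^ 2 * (σ (σ e)) * (σ (σ f)) * (σ c) ^ 2 * (σ e) * (σ f) + (c) ^ 2 * (σ (σ e)) * (σ (σ f)) * (σ c) ^ 4 * (σ e) *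 (σ f) + 2 * (c) ^ 2 * (σ (σ e)) * (σ (σ f)) * (σ e) * (σ f) + 3 * (c) ^ 2 * (σ (σ f)) ^ 2 * (σ c) ^ 2 * (σ e) ^ 2 + (c) ^ 2 * (σ (σ f)) ^ 2 * (σ c) ^ 4 * (σ e) ^ 2 + 2 * (c) ^ 2 * (σ (σ f)) ^ 2 * (σ e) ^ 2 + (e) * (f) * (σ (σ c)) ^ 2 * (σ (σ e)) * (σ (σ f)) + (e) * (f) * (σ (σ c)) ^ 2 * (σ (σ e)) * (σ (σ f)) * (σ c) ^ 2 + (e) * (f) * (σ (σ c)) ^ 2 * (σ (σ e)) * (σ c) ^ 2 * (σ f) + (e) * (f) * (σ (σ c)) ^ 2 * (σ (σ e)) * (σ f) + 5 * (e) * (f) * (σ (σ c)) ^ 2 * (σ (σ f)) * (σ c) ^ 2 * (σ e) + 5 * (e) * (f) * (σ (σ c)) ^ 2 * (σ (σ f)) * (σ e) + (e) * (f) * (σ (σ c)) ^ 2 * (σ c) ^ 2 * (σ e) * (σ f) + (e) * (f) * (σ (σ c)) ^ 2 * (σ e) * (σ f) + 2 * (e) * (f) * (σ (σ e)) * (σ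 (σ f)) + 3 * (e) * (f) * (σ (σ e)) * (σ (σ f)) * (σ c) ^ 2 + (e) * (f) * (σ (σ e)) * (σ (σ f)) * (σ c) ^ 4 + 3 * (e) * (f) * (σ (σ e)) * (σ c) ^ 2 * (σ f) + (e) * (f) * (σ (σ e)) * (σ c) ^ 4 * (σ f) + 2 * (e) * (f) * (σ (σ e)) * (σ f) + 15 * (e) * (f) * (σ (σ f)) * (σ c) ^ 2 * (σ e) + 5 * (e) * (f) * (σ (σ f)) * (σ c) ^ 4 * (σ e) + 10 * (e) * (f) * (σ (σ f)) * (σ e) + 3 * (e) * (f) * (σ c) ^ 2 * (σ e) * (σ f) + (e) * (f) * (σ c) ^ 4 * (σ e) * (σ f) + 2 * (e) * (f) * (σ e) * (σ f) + (e) * (f) ^ 2 * (σ (σ c)) ^ 2 * (σ (σ e)) + (e) * (f) ^ 2 * (σ (σ c)) ^ 2 * (σ (σ e)) * (σ c) ^ 2 + 3 * (e) * (f) ^ 2 * (σ (σ c)) ^ 2 * (σ c) ^ 2 * (σ e) + 3 * (e) * (f) ^ 2 * (σ (σ c)) ^ 2 * (σ e) + 2 * (e) * (f) ^ 2 * (σ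 (σ e)) + 3 * (e) * (f) ^ 2 * (σ (σ e)) * (σ c) ^ 2 + (e) * (f) ^ 2 * (σ (σ e)) * (σ c) ^ 4 + 9 * (e) * (f) ^ 2 * (σ c) ^ 2 * (σ e) + 3 * (e) * (f) ^ 2 * (σ c) ^ 4 * (σ e) + 6 * (e) * (f) ^ 2 * (σ e) + (e) * (σ (σ c)) ^ 2 * (σ (σ e)) * (σ (σ f)) * (σ c) ^ 2 * (σ f) + (e) * (σ (σ c)) ^ 2 * (σ (σ e)) * (σ (σ f)) * (σ f) + (e) * (σ (σ c)) ^ 2 * (σ (σ f)) * (σ c) ^ 2 * (σ e) * (σ f) + (e) * (σ (σ c)) ^ 2 * (σ (σ f)) * (σ e) * (σ f) + 2 * (e) * (σ (σ c)) ^ 2 * (σ (σ f)) ^ 2 * (σ c) ^ 2 * (σ e) + 2 * (e) * (σ (σ c)) ^ 2 * (σ (σ f)) ^ 2 * (σ e) + 3 * (e) * (σ (σ e)) * (σ (σ f)) * (σ c) ^ 2 * (σ f) + (e) * (σ (σ e)) * (σ (σ f)) * (σ c) ^ 4 * (σ f) + 2 * (e) * (σ (σ e)) * (σ (σ f)) *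 (σ f) + 3 * (e) * (σ (σ f)) * (σ c) ^ 2 * (σ e) * (σ f) + (e) * (σ (σ f)) * (σ c) ^ 4 * (σ e) * (σ f) + 2 * (e) * (σ (σ f)) * (σ e) * (σ f) + 6 * (e) * (σ (σ f)) ^ 2 * (σ c) ^ 2 * (σ e) + 2 * (e) * (σ (σ f)) ^ 2 * (σ c) ^ 4 * (σ e) + 4 * (e) * (σ (σ f)) ^ 2 * (σ e) + 3 * (e) ^ 2 * (f) * (σ (σ c)) ^ 2 * (σ (σ f)) + 3 * (e) ^ 2 * (f) * (σ (σ c)) ^ 2 * (σ (σ f)) * (σ c) ^ 2 + (e) ^ 2 * (f) * (σ (σ c)) ^ 2 * (σ c) ^ 2 * (σ f) + (e) ^ 2 * (f) * (σ (σ c)) ^ 2 * (σ f) + 6 * (e) ^ 2 * (f) * (σ (σ f)) + 9 * (e) ^ 2 * (f) * (σ (σ f)) * (σ c) ^ 2 + 3 * (e) ^ 2 * (f) * (σ (σ f)) * (σ c) ^ 4 + 3 * (e) ^ 2 * (f) * (σ c) ^ 2 * (σ f) + (e) ^ 2 * (f) * (σ c) ^ 4 * (σ f) + 2 * (e) ^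 2 * (f) * (σ f) + 4 * (e) ^ 2 * (f) ^ 2 + 2 * (e) ^ 2 * (f) ^ 2 * (σ (σ c)) ^ 2 + 2 * (e) ^ 2 * (f) ^ 2 * (σ (σ c)) ^ 2 * (σ c) ^ 2 + 6 * (e) ^ 2 * (f) ^ 2 * (σ c) ^ 2 + 2 * (e) ^ 2 * (f) ^ 2 * (σ c) ^ 4 + (e) ^ 2 * (σ (σ c)) ^ 2 * (σ (σ f)) * (σ c) ^ 2 * (σ f) + (e) ^ 2 * (σ (σ c)) ^ 2 * (σ (σ f)) * (σ f) + (e) ^ 2 * (σ (σ c)) ^ 2 * (σ (σ f)) ^ 2 + (e) ^ 2 * (σ (σ c)) ^ 2 * (σ (σ f)) ^ 2 * (σ c) ^ 2 + 3 * (e) ^ 2 * (σ (σ f)) * (σ c) ^ 2 * (σ f) + (e) ^ 2 * (σ (σ f)) * (σ c) ^ 4 * (σ f) + 2 * (e) ^ 2 * (σ (σ f)) * (σ f) + 2 * (e) ^ 2 * (σ (σ f)) ^ 2 + 3 * (e) ^ 2 * (σ (σ f)) ^ 2 * (σ c) ^ 2 + (e) ^ 2 * (σ (σ f)) ^ 2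 * (σ c) ^ 4 + (f) * (σ (σ c)) ^ 2 * (σ (σ e)) * (σ (σ f)) * (σ c) ^ 2 * (σ e) + (f) * (σ (σ c)) ^ 2 * (σ (σ e)) * (σ (σ f)) * (σ e) + (f) * (σ (σ c)) ^ 2 * (σ (σ e)) * (σ c) ^ 2 * (σ e) * (σ f) + (f) * (σ (σ c)) ^ 2 * (σ (σ e)) * (σ e) * (σ f) + 2 * (f) * (σ (σ c)) ^ 2 * (σ (σ f)) * (σ c) ^ 2 * (σ e) ^ 2 + 2 * (f) * (σ (σ c)) ^ 2 * (σ (σ f)) * (σ e) ^ 2 + 3 * (f) * (σ (σ e)) * (σ (σ f)) * (σ c) ^ 2 * (σ e) + (f) * (σ (σ e)) * (σ (σ f)) * (σ c) ^ 4 * (σ e) + 2 * (f) * (σ (σ e)) * (σ (σ f)) * (σ e) + 3 * (f) * (σ (σ e)) * (σ c) ^ 2 * (σ e) * (σ f) + (f) * (σ (σ e)) * (σ c) ^ 4 * (σ e) * (σ f) + 2 * (f) * (σ (σ e)) * (σ e) * (σ f) + 6 * (f) * (σ (σ f)) * (σ c) ^ 2 * (σ e) ^ 2 + 2 * (f) *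 (σ (σ f)) * (σ c) ^ 4 * (σ e) ^ 2 + 4 * (f) * (σ (σ f)) * (σ e) ^ 2 + (f) ^ 2 * (σ (σ c)) ^ 2 * (σ (σ e)) * (σ c) ^ 2 * (σ e) + (f) ^ 2 * (σ (σ c)) ^ 2 * (σ (σ e)) * (σ e) + (f) ^ 2 * (σ (σ c)) ^ 2 * (σ c) ^ 2 * (σ e) ^ 2 + (f) ^ 2 * (σ (σ c)) ^ 2 * (σ e) ^ 2 + 3 * (f) ^ 2 * (σ (σ e)) * (σ c) ^ 2 * (σ e) + (f) ^ 2 * (σ (σ e)) * (σ c) ^ 4 * (σ e) + 2 * (f) ^ 2 * (σ (σ e)) * (σ e) + 3 * (f) ^ 2 * (σ c) ^ 2 * (σ e) ^ 2 + (f) ^ 2 * (σ c) ^ 4 * (σ e) ^ 2 + 2 * (f) ^ 2 * (σ e) ^ 2 + (σ (σ c)) ^ 2 * (σ (σ e)) * (σ (σ f)) * (σ c) ^ 2 * (σ e) * (σ f) + (σ (σ c)) ^ 2 * (σ (σ e)) * (σ (σ f)) * (σ e) * (σ f) + (σ (σ c)) ^ 2 * (σ (σ f)) ^ 2 * (σ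 c) ^ 2 * (σ e) ^ 2 + (σ (σ c)) ^ 2 * (σ (σ f)) ^ 2 * (σ e) ^ 2 + 3 * (σ (σ e)) * (σ (σ f)) * (σ c) ^ 2 * (σ e) * (σ f) + (σ (σ e)) * (σ (σ f)) * (σ c) ^ 4 * (σ e) * (σ f) + 2 * (σ (σ e)) * (σ (σ f)) * (σ e) * (σ f) + 3 * (σ (σ f)) ^ 2 * (σ c) ^ 2 * (σ e) ^ 2 + (σ (σ f)) ^ 2 * (σ c) ^ 4 * (σ e) ^ 2 + 2 * (σ (σ f)) ^ 2 * (σ e) ^ 2) * h2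
  have hWF : (σ (σ e) + e) * (σ f + f) = (σ (σ f) + f) * (σ e + e) := by
    refine haddz _ _ (hsqz _ ?_)
    exact (mul_eq_zero.mp h5).resolve_left (mul_ne_zero hP2 (mul_ne_zero heps hepsne))
  have hWrho : σ (σ e) + e = ((σ (σ e) + e) * (σ (σ f) + f)⁻¹) * (σ (σ f) + f) :=
    (inv_mul_cancel_right₀ hWf0 _).symm
  have hrho0 : ((σ (σ e) + e) * (σ (σ f) + f)⁻¹) ≠ 0 := mul_ne_zero hW0 (inv_ne_zero hWf0)
  have hsW : σ (σ (σ e) + e) = e + σ e := by simp only [map_add, h3]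
  have hsWf : σ (σ (σ f) + f) = f + σ f := by simp only [map_add, h3]
  have hFf : f + σ f ≠ 0 := fun h => hF (by linear_combination h)
  have hrhosig : σ ((σ (σ e) + e) * (σ (σ f) + f)⁻¹) = ((σ (σ e) + e) * (σ (σ f) + f)⁻¹) := by
    rw [map_mul, map_inv₀, hsW, hsWf, ← div_eq_mul_inv, ← div_eq_mul_inv,
      div_eq_div_iff hFf hWf0]
    linear_combination hWF + ((e + σ e) * (σ (σ f) + f) - (σ (σ e) + e) * (f + σ f)) * h2
  have hErho : σ e + e = ((σ (σ e) + e) * (σ (σ f) + f)⁻¹) * (σ f + f) := by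
    have h6 := congrArg σ hWrho
    rw [map_mul, hrhosig, hsW, hsWf] at h6
    linear_combination h6
  have hsErho : σ (σ e) + σ e = ((σ (σ e) + e) * (σ (σ f) + f)⁻¹) * (σ (σ f) + σ f) := by
    have h6 := congrArg σ hErho
    rw [map_mul, hrhosig] at h6
    simp only [map_add] at h6
    linear_combination h6
  have hNrho : ((σ e + e) * σ A + (σ (σ e) + σ e) * A) = ((σ (σ e) + e) * (σ (σ f) + f)⁻¹) * ((σ f + f) * σ A + (σ (σ f) + σ f) * A) := by
    linear_combination σ A * hErho + A * hsErho
  have hNrho2p : ((1 + c ^ 2) + (1 + σ c ^ 2)) * ((σ e + e) * σ A + (σ (σ e) + σ e) * A) = ((1 + c ^ 2) + (1 + σ c ^ 2)) * (((σ (σ e) + e) * (σ (σ f) + f)⁻¹) ^ 2 * ((σ f + f) * σ A + (σ (σ f) + σ f) * A)) := by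
    linear_combination (1) * hN1 + (-(((σ (σ e) + e) * (σ (σ f) + f)⁻¹)) ^ 2) * hN1f + ((c) ^ 2 * (e) + (c) ^ 2 * (e) * (σ c) ^ 2 + (c) ^ 2 * (f) * (((σ (σ e) + e) * (σ (σ f) + f)⁻¹)) + (c) ^ 2 * (f) * (((σ (σ e) + e) * (σ (σ f) + f)⁻¹)) * (σ c) ^ 2 + (c) ^ 2 * (((σ (σ e) + e) * (σ (σ f) + f)⁻¹)) * (σ (σ f)) + (c) ^ 2 * (((σ (σ e) + e) * (σ (σ f) + f)⁻¹)) * (σ (σ f)) * (σ c) ^ 2 + (c) ^ 2 * (σ (σ e)) + (c) ^ 2 * (σ (σ e)) * (σ c) ^ 2 + (e) + (e) * (σ c) ^ 2 + (f) * (((σ (σ e) + e) * (σ (σ f) + f)⁻¹)) + (f) * (((σ (σ e) + e) * (σ (σ f) + f)⁻¹)) * (σ c) ^ 2 + (((σ (σ e) + e) * (σ (σ f) + f)⁻¹)) * (σ (σ f)) + (((σ (σ e) + e) * (σ (σ f) + f)⁻¹)) * (σ (σ f)) * (σ c) ^ 2 + (σ (σ e)) + (σ (σ e)) * (σ c) ^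 2) * hWrho + (0) * h2
  have hNrho2 : ((σ e + e) * σ A + (σ (σ e) + σ e) * A) = ((σ (σ e) + e) * (σ (σ f) + f)⁻¹) ^ 2 * ((σ f + f) * σ A + (σ (σ f) + σ f) * A) := mul_left_cancel₀ hP1 hNrho2p
  have h12 : (((σ (σ e) + e) * (σ (σ f) + f)⁻¹) ^ 2 - ((σ (σ e) + e) * (σ (σ f) + f)⁻¹)) * ((σ f + f) * σ A + (σ (σ f) + σ f) * A) = 0 := by
    linear_combination hNrho - hNrho2
  have hrho1 : ((σ (σ e) + e) * (σ (σ f) + f)⁻¹) = 1 := by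
    rcases mul_eq_zero.mp h12 with h' | h'
    · have h'' : ((σ (σ e) + e) * (σ (σ f) + f)⁻¹) * (((σ (σ e) + e) * (σ (σ f) + f)⁻¹) - 1) = 0 := by linear_combination h'
      rcases mul_eq_zero.mp h'' with h3' | h3'
      · exact absurd h3' hrho0
      · exact sub_eq_zero.mp h3'
    · exact absurd h' hNf0
  have hEF : σ e + e = σ f + f := by
    rw [hrho1, one_mul] at hErho; exact hErho
  have hsEF : σ (σ e) + σ e = σ (σ f) + σ f := by
    rw [hrho1, one_mul] at hsErho; exact hsErho
  have hfin : ((1 : K) + c ^ 2) * (e + f) ^ 2 = 0 := by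
    linear_combination (1) * hRe + (-1) * hRf + (-(A) - (U) - (U) * (c) ^ 2 - (c) ^ 2 * (e) - (c) ^ 2 * (σ e) - (e) - (σ e)) * hsEF + (-(c) ^ 2 * (σ (σ f)) - (c) ^ 2 * (σ U) - (c) ^ 2 * (σ f) - (σ (σ f)) - (σ A) - (σ U) - (σ f)) * hEF + ((c) ^ 2 * (e) * (f) + (c) ^ 2 * (f) ^ 2 + (e) * (f) + (f) ^ 2) * h2
  exact haddz e f (hsqz _ ((mul_eq_zero.mp hfin).resolve_left heps))


open Finset Polynomial in
theorem surj_phi {F : Type*} [Field F] [Fintype F] (m : ℕ) (hm : 0 < m)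
    (hF : Fintype.card F = 2 ^ (3 * m)) (σ : F →+* F) (hσ : ∀ x : F, σ x = x ^ 2 ^ m)
    (h3 : ∀ x : F, σ (σ (σ x)) = x) (h2 : (2 : F) = 0)
    (E : F) (hE : E ≠ 0) (hTrE : E + σ E + σ (σ E) = 0) (M : F) (hM : σ M = M) :
    ∃ y : F, E * σ (σ y + y) + σ E * (σ y + y) = M := by
  classical
  have haddz : ∀ x y : F, x + y = 0 → x = y := fun x y h => by linear_combination h - y * h2
  have hsE : σ E ≠ 0 := fun h => hE (σ.injective (by rw [map_zero]; exact h))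
  set K : Finset F := Finset.univ.filter (fun x => σ x = x) with hKdef
  have hKcard : K.card ≤ 2 ^ m := by
    set P : Polynomial F := X ^ (2 ^ m) - X with hPdef
    have hPne : P ≠ 0 := by
      intro h
      have hco : P.coeff 1 = -1 := by
        rw [hPdef, coeff_sub, coeff_X_pow, coeff_X_one, if_neg (by
          have := Nat.one_lt_two_pow_iff.mpr hm.ne'
          omega)]
        ring
      rw [h] at hco
      simp only [coeff_zero] at hco
      have h1 : (1 : F) = 0 := by linear_combination -hco + h2
      exact one_ne_zero h1
    have hdeg : P.natDegree ≤ 2 ^ m := by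
      refine le_trans (natDegree_sub_le _ _) ?_
      simp only [natDegree_X_pow, natDegree_X]
      have := Nat.one_le_two_pow (n := m)
      omega
    have hsub : K ⊆ P.roots.toFinset := by
      intro x hx
      rw [hKdef, Finset.mem_filter] at hx
      rw [Multiset.mem_toFinset, mem_roots hPne]
      rw [IsRoot, hPdef]
      simp only [eval_sub, eval_pow, eval_X]
      rw [← hσ, hx.2, sub_self]
    calc K.card ≤ P.roots.toFinset.card := Finset.card_le_card hsub
      _ ≤ Multiset.card P.roots := Multiset.toFinset_card_le _
      _ ≤ P.natDegree := P.card_roots'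
      _ ≤ 2 ^ m := hdeg
  have hfib : ∀ (g : F → F), (∀ x y : F, g (x + y) = g x + g y) →
      ∀ (n : ℕ), (Finset.univ.filter (fun x => g x = 0)).card ≤ n →
      ∀ b : F, (Finset.univ.filter (fun x => g x = b)).card ≤ n := by
    intro g hg n hn b
    rcases (Finset.univ.filter (fun x => g x = b)).eq_empty_or_nonempty with h | ⟨x₀, hx₀⟩
    · rw [h]; simpa using Nat.zero_le n
    · have hx₀' : g x₀ = b := (Finset.mem_filter.mp hx₀).2
      refine le_trans (Finset.card_le_card_of_injOn (fun x => x + x₀) ?_ ?_) hn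
      · intro x hx
        simp only [Finset.mem_coe, Finset.mem_filter, Finset.mem_univ, true_and] at hx ⊢
        rw [hg, hx, hx₀']
        linear_combination b * h2
      · intro x _ y _ hxy
        exact add_right_cancel hxy
  have hLker : (Finset.univ.filter (fun y : F => σ y + y = 0)).card ≤ 2 ^ m := by
    refine le_trans (Finset.card_le_card ?_) hKcard
    intro x hx
    rw [Finset.mem_filter] at hx
    rw [hKdef, Finset.mem_filter]
    exact ⟨Finset.mem_univ x, haddz _ _ hx.2⟩
  set Φ : F → F := fun y => E * σ (σ y + y) + σ E * (σ y + y) with hΦdef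
  have hΦadd : ∀ x y : F, Φ (x + y) = Φ x + Φ y := by
    intro x y
    simp only [hΦdef, map_add]
    ring
  have hΦfix : ∀ y : F, σ (Φ y) = Φ y := by
    intro y
    simp only [hΦdef, map_add, map_mul, h3]
    linear_combination (σ (σ y) + σ y) * hTrE +
      (- E * σ (σ y) - E * σ y - σ E * σ y) * h2
  have hkerΦ : (Finset.univ.filter (fun y : F => Φ y = 0)).card ≤ 2 ^ m * 2 ^ m := by
    have hg : ∀ x y : F, (σ (x + y) + (x + y)) * E⁻¹ = (σ x + x) * E⁻¹ + (σ y + y) * E⁻¹ := by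
      intro x y
      simp only [map_add]
      ring
    have hg0 : (Finset.univ.filter (fun y : F => (σ y + y) * E⁻¹ = 0)).card ≤ 2 ^ m := by
      refine le_trans (Finset.card_le_card ?_) hLker
      intro y hy
      rw [Finset.mem_filter] at hy ⊢
      refine ⟨Finset.mem_univ _, ?_⟩
      rcases mul_eq_zero.mp hy.2 with h | h
      · exact h
      · exact absurd h (inv_ne_zero hE)
    have hmaps : ∀ y ∈ Finset.univ.filter (fun y : F => Φ y = 0),
        (σ y + y) * E⁻¹ ∈ K := by
      intro y hy
      rw [Finset.mem_filter] at hy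
      have hy2 : E * σ (σ y + y) + σ E * (σ y + y) = 0 := hy.2
      rw [hKdef, Finset.mem_filter]
      refine ⟨Finset.mem_univ _, ?_⟩
      rw [map_mul, map_inv₀, ← div_eq_mul_inv, ← div_eq_mul_inv, div_eq_div_iff hsE hE]
      linear_combination hy2 - σ E * (σ y + y) * h2
    have hb : ∀ b ∈ K, ((Finset.univ.filter (fun y : F => Φ y = 0)).filter
        (fun y => (σ y + y) * E⁻¹ = b)).card ≤ 2 ^ m := by
      intro b _
      refine le_trans (Finset.card_le_card ?_)
        (hfib (fun y => (σ y + y) * E⁻¹) hg (2 ^ m) hg0 b)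
      intro y hy
      rw [Finset.mem_filter] at hy ⊢
      exact ⟨Finset.mem_univ _, hy.2⟩
    calc (Finset.univ.filter (fun y : F => Φ y = 0)).card
        ≤ 2 ^ m * K.card :=
          Finset.card_le_mul_card_image_of_maps_to hmaps (2 ^ m) hb
      _ ≤ 2 ^ m * 2 ^ m := Nat.mul_le_mul_left _ hKcard
  have h1 : (Finset.univ : Finset F).card ≤ (2 ^ m * 2 ^ m) * (Finset.univ.image Φ).card :=
    Finset.card_le_mul_card_image Finset.univ _ (fun b _ => hfib Φ hΦadd _ hkerΦ b)
  have hcardF : (Finset.univ : Finset F).card = (2 ^ m * 2 ^ m) * 2 ^ m := by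
    rw [Finset.card_univ, hF]
    rw [← pow_add, ← pow_add]
    congr 1
    omega
  have himgcard : 2 ^ m ≤ (Finset.univ.image Φ).card := by
    rw [hcardF] at h1
    exact Nat.le_of_mul_le_mul_left h1 (by positivity)
  have hsubK : Finset.univ.image Φ ⊆ K := by
    intro x hx
    obtain ⟨y, -, rfl⟩ := Finset.mem_image.mp hx
    rw [hKdef, Finset.mem_filter]
    exact ⟨Finset.mem_univ _, hΦfix y⟩
  have heq : Finset.univ.image Φ = K := Finset.eq_of_subset_of_card_le hsubK
    (le_trans hKcard himgcard)
  have hMK : M ∈ K := by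
    rw [hKdef, Finset.mem_filter]
    exact ⟨Finset.mem_univ _, hM⟩
  rw [← heq] at hMK
  obtain ⟨y, -, hy⟩ := Finset.mem_image.mp hMK
  exact ⟨y, hy⟩

set_option maxHeartbeats 4000000 in
theorem stmt_12 (m : ℕ) (hm : 0 < m) (hm3 : (2 * m) % 3 ≠ 1) (F : Type*) [Field F] [Fintype F]
    (hF : Fintype.card F = 2 ^ (3 * m)) (δ c : F)
    (hδ : δ + δ ^ (2 ^ m) + δ ^ (2 ^ (2 * m)) = 0)
    (hc : c ^ (2 ^ m) ≠ c)
    (G : F → F)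
    (hG : ∀ x, G x = (x ^ (2 ^ m) + x + δ) ^ (2 ^ (3 * m - 1) + 2 ^ (m - 1)) + x) :
    (∀ a b : F, {x : F | G (x + a) + c * G x = b}.ncard ≤ 2) ∧
    (∃ a b : F, {x : F | G (x + a) + c * G x = b}.ncard = 2) := by
  classical
  -- characteristic 2
  have hchar2 : CharP F 2 := by
    obtain ⟨p, hp⟩ := CharP.exists F
    haveI := hp
    have hprime : p.Prime := CharP.char_is_prime F p
    obtain ⟨n, -, hcard⟩ := FiniteField.card F p
    have hdvd : p ∣ 2 ^ (3 * m) := by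
      rw [← hF, hcard]
      exact dvd_pow_self p n.pos.ne'
    have hp2 : p = 2 := (Nat.prime_dvd_prime_iff_eq hprime Nat.prime_two).mp
      (hprime.dvd_of_dvd_pow hdvd)
    rwa [hp2] at hp
  haveI := hchar2
  haveI : Fact (Nat.Prime 2) := ⟨Nat.prime_two⟩
  have h2 : (2 : F) = 0 := by
    have := CharP.cast_eq_zero F 2
    simpa using this
  obtain ⟨σ, hσ⟩ : ∃ σ : F →+* F, ∀ x : F, σ x = x ^ 2 ^ m :=
    ⟨iterateFrobenius F 2 m, fun x => rfl⟩
  have haddz : ∀ x y : F, x + y = 0 → x = y := fun x y h => by linear_combination h - y * h2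
  have hsqz : ∀ x : F, x ^ 2 = 0 → x = 0 := fun x h =>
    pow_eq_zero_iff (n := 2) (by norm_num) |>.mp h
  have hsq : ∀ x y : F, x ^ 2 = y ^ 2 → x = y := fun x y h => by
    refine haddz x y (hsqz _ ?_); linear_combination h + (x * y + y * y) * h2
  have hpowcard : ∀ x : F, x ^ 2 ^ (3 * m) = x := by
    intro x
    rw [← hF]
    exact FiniteField.pow_card x
  have h3 : ∀ x : F, σ (σ (σ x)) = x := by
    intro x
    rw [hσ, hσ, hσ, ← pow_mul, ← pow_mul]
    have hexp : 2 ^ m * (2 ^ m * 2 ^ m) = 2 ^ (3 * m) := by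
      rw [← pow_add, ← pow_add]
      congr 1
      omega
    rw [hexp]
    exact hpowcard x
  have hδ' : δ + σ δ + σ (σ δ) = 0 := by
    rw [hσ, hσ, ← pow_mul]
    have hexp : 2 ^ m * 2 ^ m = 2 ^ (2 * m) := by
      rw [← pow_add]; congr 1; omega
    rw [hexp]
    exact hδ
  have hc' : σ c ≠ c := by rw [hσ]; exact hc
  have hG' : ∀ x : F, G x = (σ x + x + δ) ^ (2 ^ (3 * m - 1) + 2 ^ (m - 1)) + x := by
    intro x; rw [hG, hσ]
  have hDD : ∀ w : F, (w ^ (2 ^ (3 * m - 1) + 2 ^ (m - 1))) ^ 2 = w * σ w := by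
    intro w
    rw [← pow_mul]
    have e1 : 2 ^ (3 * m - 1) * 2 = 2 ^ (3 * m) := by
      rw [← pow_succ]; congr 1; omega
    have e2 : 2 ^ (m - 1) * 2 = 2 ^ m := by
      rw [← pow_succ]; congr 1; omega
    have hexp : (2 ^ (3 * m - 1) + 2 ^ (m - 1)) * 2 = 2 ^ (3 * m) + 2 ^ m := by
      rw [add_mul, e1, e2]
    rw [hexp, pow_add, hpowcard, hσ]
  have key : ∀ x0 e a : F,
      (G (x0 + e + a) + c * G (x0 + e) + (G (x0 + a) + c * G x0)) ^ 2
        = (1 + c ^ 2) * ((σ e + e) * (σ (σ e) + σ e) + (σ e + e) * σ (σ x0 + x0 + δ) + (σ (σ e) + σ e) * (σ x0 + x0 + δ) + e ^ 2) + (σ e + e) * σ (σ a + a) + (σ (σ e) + σ e) * (σ a + a) := by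
    intro x0 e a
    have hq1 := hDD (σ (x0 + e + a) + (x0 + e + a) + δ)
    have hq2 := hDD (σ (x0 + e) + (x0 + e) + δ)
    have hq3 := hDD (σ (x0 + a) + (x0 + a) + δ)
    have hq4 := hDD (σ x0 + x0 + δ)
    rw [hG', hG', hG', hG']
    generalize hT1 : (σ (x0 + e + a) + (x0 + e + a) + δ) ^ (2 ^ (3 * m - 1) + 2 ^ (m - 1)) = T1 at hq1 ⊢
    generalize hT2 : (σ (x0 + e) + (x0 + e) + δ) ^ (2 ^ (3 * m - 1) + 2 ^ (m - 1)) = T2 at hq2 ⊢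
    generalize hT3 : (σ (x0 + a) + (x0 + a) + δ) ^ (2 ^ (3 * m - 1) + 2 ^ (m - 1)) = T3 at hq3 ⊢
    generalize hT4 : (σ x0 + x0 + δ) ^ (2 ^ (3 * m - 1) + 2 ^ (m - 1)) = T4 at hq4 ⊢
    simp only [map_add] at hq1 hq2 hq3 hq4 ⊢
    linear_combination (1) * hq1 + ((c) ^ 2) * hq2 + (1) * hq3 + ((c) ^ 2) * hq4 + (2 * (a) * (c) * (e) + 2 * (a) * (c) * (T2) + 2 * (a) * (c) * (T4) + 4 * (a) * (c) * (x0) + 2 * (a) * (e) + (a) * (σ (σ a)) + (a) * (σ (σ x0)) + (a) * (σ a) + (a) * (σ δ) + (a) * (σ x0) + 2 * (a) * (T1) + 2 * (a) * (T3) + 4 * (a) * (x0) + 2 * (a) ^ 2 + (c) * (e) * (T1) + (c) * (e) * (T2) + (c) * (e) * (T3) + (c) * (e) * (T4) + 4 * (c) * (e) * (x0) + (c) * (e) ^ 2 + (c) * (T1) * (T2) + (c) * (T1) * (T4) + 2 * (c) * (T1) * (x0) + (c) * (T2) * (T3) + 2 * (c) * (T2) * (x0) + (c) * (T3) * (T4)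 + 2 * (c) * (T3) * (x0) + 2 * (c) * (T4) * (x0) + 4 * (c) * (x0) ^ 2 + (c) ^ 2 * (δ) * (σ (σ x0)) + (c) ^ 2 * (δ) * (σ δ) + (c) ^ 2 * (δ) * (σ x0) + (c) ^ 2 * (e) * (T2) + (c) ^ 2 * (e) * (T4) + 2 * (c) ^ 2 * (e) * (x0) + (c) ^ 2 * (σ (σ x0)) * (σ x0) + (c) ^ 2 * (σ (σ x0)) * (x0) + (c) ^ 2 * (σ δ) * (σ x0) + (c) ^ 2 * (σ δ) * (x0) + (c) ^ 2 * (σ x0) * (x0) + (c) ^ 2 * (σ x0) ^ 2 + (c) ^ 2 * (T2) * (T4) + 2 * (c) ^ 2 * (T2) * (x0) + 2 * (c) ^ 2 * (T4) * (x0) + 2 * (c) ^ 2 * (x0) ^ 2 + (δ) * (σ (σ a)) + (δ) * (σ (σ x0)) + (δ) * (σ a) + (δ) * (σ δ) + (δ) * (σ x0) + (e) * (T1) + (e) * (T3) + 2 * (e) * (x0) + (σ (σ a)) * (σ a) + (σ (σ a)) * (σ x0) + (σ (σ a)) * (x0) + (σ (σ x0)) * (σ a) + (σ (σ x0)) * (σ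 x0) + (σ (σ x0)) * (x0) + (σ a) * (σ δ) + 2 * (σ a) * (σ x0) + (σ a) * (x0) + (σ a) ^ 2 + (σ δ) * (σ x0) + (σ δ) * (x0) + (σ x0) * (x0) + (σ x0) ^ 2 + (T1) * (T3) + 2 * (T1) * (x0) + 2 * (T3) * (x0) + 2 * (x0) ^ 2) * h2
  have hTrU : ∀ x0 : F, (σ x0 + x0 + δ) + σ (σ x0 + x0 + δ) + σ (σ (σ x0 + x0 + δ)) = 0 := by
    intro x0
    simp only [map_add, h3]
    linear_combination (1) * hδ' + (σ (σ x0) + σ x0 + x0) * h2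
  have hTrA : ∀ a : F, (σ a + a) + σ (σ a + a) + σ (σ (σ a + a)) = 0 := by
    intro a
    simp only [map_add, h3]
    linear_combination (a + σ (σ a) + σ a) * h2
  have keyR : ∀ x0 x a b : F, G (x0 + a) + c * G x0 = b → G (x + a) + c * G x = b →
      (1 + c ^ 2) * ((σ (x + x0) + (x + x0)) * (σ (σ (x + x0)) + σ (x + x0)) + (σ (x + x0) + (x + x0)) * σ (σ x0 + x0 + δ) + (σ (σ (x + x0)) + σ (x + x0)) * (σ x0 + x0 + δ) + (x + x0) ^ 2) + (σ (x + x0) + (x + x0)) * σ (σ a + a) + (σ (σ (x + x0)) + σ (x + x0)) * (σ a + a) = 0 := by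
    intro x0 x a b hx0 hx
    have harg : x0 + (x + x0) = x := by linear_combination x0 * h2
    have h9 := key x0 (x + x0) a
    rw [harg, hx, hx0] at h9
    rw [← h9]
    linear_combination (2 * b ^ 2) * h2
  constructor
  · intro a b
    by_contra hcon
    obtain ⟨x1, hx1, x2, hx2, x3, hx3, h12, h13, h23⟩ :=
      (Set.two_lt_ncard (Set.toFinite _)).mp (not_le.mp hcon)
    rw [Set.mem_setOf_eq] at hx1 hx2 hx3
    have hR2 := keyR x1 x2 a b hx1 hx2
    have hR3 := keyR x1 x3 a b hx1 hx3
    have he2 : x2 + x1 ≠ 0 := fun h => h12 (haddz _ _ h).symm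
    have he3 : x3 + x1 ≠ 0 := fun h => h13 (haddz _ _ h).symm
    have := core_unique σ h3 h2 c (σ x1 + x1 + δ) (σ a + a) hc' (hTrU x1) (hTrA a)
      (x2 + x1) (x3 + x1) he2 he3 hR2 hR3
    exact h23 (add_right_cancel this)
  · -- existence
    have heps : (1 : F) + c ^ 2 ≠ 0 := by
      intro h
      have hc1 : c = 1 := hsq c 1 (by linear_combination -h + c ^ 2 * h2)
      exact hc' (by rw [hc1, map_one])
    set e : F := (σ (1 + c ^ 2)⁻¹) ^ 2 ^ (3 * m - 1) with hedef
    have he2 : e ^ 2 = σ (1 + c ^ 2)⁻¹ := by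
      rw [hedef, ← pow_mul]
      have hexp : 2 ^ (3 * m - 1) * 2 = 2 ^ (3 * m) := by
        rw [← pow_succ]; congr 1; omega
      rw [hexp]
      exact hpowcard _
    have hE0 : σ e + e ≠ 0 := by
      intro h
      have h6 : σ e = e := haddz _ _ h
      have h7 : σ (σ (1 + c ^ 2)⁻¹) = σ (1 + c ^ 2)⁻¹ := by
        rw [← he2, map_pow, h6]
      have h8 := congrArg σ h7
      rw [h3] at h8
      rw [h7] at h8
      have h9 : σ ((1 + c ^ 2)⁻¹) = (1 + c ^ 2)⁻¹ := h8.symm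
      rw [map_inv₀] at h9
      have h10 : σ (1 + c ^ 2) = 1 + c ^ 2 := inv_injective h9
      have h11 : σ c = c := by
        refine hsq _ _ ?_
        have h12 : (1 : F) + σ c ^ 2 = 1 + c ^ 2 := by
          rw [← h10]; simp only [map_add, map_one, map_pow]
        linear_combination h12
      exact hc' h11
    have he0 : e ≠ 0 := by
      intro h
      refine hE0 ?_
      rw [h, map_zero, add_zero]
    have hTrE : (σ e + e) + σ (σ e + e) + σ (σ (σ e + e)) = 0 := by
      simp only [map_add, h3]
      linear_combination (e + σ (σ e) + σ e) * h2
    have hMs : σ (e * σ e + e * σ (σ e) + σ e * σ (σ e) + (e + σ e + σ (σ e)) ^ 2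
        + ((σ e + e) * σ δ + (σ (σ e) + σ e) * δ))
        = e * σ e + e * σ (σ e) + σ e * σ (σ e) + (e + σ e + σ (σ e)) ^ 2
        + ((σ e + e) * σ δ + (σ (σ e) + σ e) * δ) := by
      simp only [map_add, map_mul, map_pow, h3]
      linear_combination ((σ (σ e)) + (σ e)) * hδ' + (-(δ) * (σ (σ e)) - (δ) * (σ e) - (σ δ) * (σ e)) * h2
    obtain ⟨x0, hx0⟩ := surj_phi m hm hF σ hσ h3 h2 (σ e + e) hE0 hTrE
      (e * σ e + e * σ (σ e) + σ e * σ (σ e) + (e + σ e + σ (σ e)) ^ 2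
        + ((σ e + e) * σ δ + (σ (σ e) + σ e) * δ)) hMs
    obtain ⟨a, ha⟩ := surj_phi m hm hF σ hσ h3 h2 (σ e + e) hE0 hTrE 1 (map_one σ)
    have hinv : (1 + c ^ 2) * (1 + c ^ 2)⁻¹ = 1 := mul_inv_cancel₀ heps
    have hs2esq : σ (σ e) ^ 2 = (1 + c ^ 2)⁻¹ := by
      rw [← map_pow, ← map_pow, he2, h3]
    have hRe0 : (1 + c ^ 2) * ((σ e + e) * (σ (σ e) + σ e) + (σ e + e) * σ (σ x0 + x0 + δ) + (σ (σ e) + σ e) * (σ x0 + x0 + δ) + e ^ 2) + (σ e + e) * σ (σ a + a) + (σ (σ e) + σ e) * (σ a + a) = 0 := by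
      simp only [map_add] at hx0 ha ⊢
      linear_combination (1 + (c) ^ 2) * hx0 + (1) * ha + (1 + (c) ^ 2) * hs2esq + (1) * hinv + (1 + (c) ^ 2 * (δ) * (σ (σ e)) + (c) ^ 2 * (δ) * (σ e) + 2 * (c) ^ 2 * (e) * (σ (σ e)) + (c) ^ 2 * (e) * (σ δ) + 2 * (c) ^ 2 * (e) * (σ e) + (c) ^ 2 * (e) ^ 2 + 2 * (c) ^ 2 * (σ (σ e)) * (σ e) + (c) ^ 2 * (σ δ) * (σ e) + (c) ^ 2 * (σ e) ^ 2 + (δ) * (σ (σ e)) + (δ) * (σ e) + 2 * (e) * (σ (σ e)) + (e) * (σ δ) + 2 * (e) * (σ e) + (e) ^ 2 + 2 * (σ (σ e)) * (σ e) + (σ δ) * (σ e) + (σ e) ^ 2) * h2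
    refine ⟨a, G (x0 + a) + c * G x0, ?_⟩
    have hxne : x0 ≠ x0 + e := by
      intro h
      exact he0 (by linear_combination -h)
    have hset : {x : F | G (x + a) + c * G x = G (x0 + a) + c * G x0} = {x0, x0 + e} := by
      apply Set.Subset.antisymm
      · intro x hx
        rw [Set.mem_setOf_eq] at hx
        by_cases hxx : x + x0 = 0
        · have : x = x0 := haddz _ _ hxx
          rw [this]
          exact Set.mem_insert _ _
        · have hRx := keyR x0 x a (G (x0 + a) + c * G x0) rfl hx
          have hfe : x + x0 = e := core_unique σ h3 h2 c (σ x0 + x0 + δ) (σ a + a) hc'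
            (hTrU x0) (hTrA a) (x + x0) e hxx he0 hRx hRe0
          have : x = x0 + e := by linear_combination hfe - x0 * h2
          rw [this]
          exact Set.mem_insert_iff.mpr (Or.inr rfl)
      · intro x hx
        rcases Set.mem_insert_iff.mp hx with h | h
        · rw [h]
          exact Set.mem_setOf_eq ▸ rfl
        · rw [Set.mem_singleton_iff.mp h]
          rw [Set.mem_setOf_eq]
          have h9 := key x0 e a
          rw [hRe0] at h9
          exact haddz _ _ (hsqz _ h9)
    rw [hset]
    exact Set.ncard_pair hxne
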